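/- For all real y > 0 and all δ with 0 ≤ δ ≤ 1/3, y/sinh(y) ≤ 2^δ e^{-δy}. -/

import Mathlib

open Real

/-- If `f 0 = 0` and `f' ≥ 0` on `[0,∞)` then `f ≥ 0` on `[0,∞)`. -/
lemma aux_nonneg (f f' : ℝ → ℝ) (hder : ∀ x, HasDerivAt f (f' x) x)
    (h0 : f 0 = 0) (hge : ∀ x, 0 ≤ x → 0 ≤ f' x) :
    ∀ x, 0 ≤ x → 0 ≤ f x := by
  intro x hx
  have hmono : MonotoneOn f (Set.Ici (0:ℝ)) := by
    apply monotoneOn_of_deriv_nonneg (convex_Ici 0)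
    · exact fun t _ => ((hder t).differentiableAt).continuousAt.continuousWithinAt
    · exact fun t _ => ((hder t).differentiableAt).differentiableWithinAt
    · intro t ht
      rw [interior_Ici] at ht
      rw [(hder t).deriv]
      exact hge t (le_of_lt ht)
  calc (0:ℝ) = f 0 := h0.symm
    _ ≤ f x := hmono (by simp) (by simpa using hx) hx

noncomputable def F0 : ℝ → ℝ := fun x => Real.sinh (3*x) - 3 * Real.sinh x - 4 * x ^ 3 * Real.cosh x
noncomputable def F1 : ℝ → ℝ := fun x => 3 * Real.cosh (3*x) - 3 * Real.cosh x
  - 12 * x ^ 2 * Real.cosh x - 4 * x ^ 3 * Real.sinh x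
noncomputable def F2 : ℝ → ℝ := fun x => 9 * Real.sinh (3*x) - 3 * Real.sinh x
  - 24 * x * Real.cosh x - 24 * x ^ 2 * Real.sinh x - 4 * x ^ 3 * Real.cosh x
noncomputable def F3 : ℝ → ℝ := fun x => 27 * Real.cosh (3*x) - 27 * Real.cosh x
  - 72 * x * Real.sinh x - 36 * x ^ 2 * Real.cosh x - 4 * x ^ 3 * Real.sinh x
noncomputable def F4 : ℝ → ℝ := fun x => 81 * Real.sinh (3*x) - 99 * Real.sinh x
  - 144 * x * Real.cosh x - 48 * x ^ 2 * Real.sinh x - 4 * x ^ 3 * Real.cosh x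
noncomputable def F5 : ℝ → ℝ := fun x => 243 * Real.cosh (3*x) - 243 * Real.cosh x
  - 240 * x * Real.sinh x - 60 * x ^ 2 * Real.cosh x - 4 * x ^ 3 * Real.sinh x
noncomputable def F6 : ℝ → ℝ := fun x => 729 * Real.sinh (3*x) - 483 * Real.sinh x
  - 360 * x * Real.cosh x - 72 * x ^ 2 * Real.sinh x - 4 * x ^ 3 * Real.cosh x
noncomputable def F7 : ℝ → ℝ := fun x => 2187 * Real.cosh (3*x) - 843 * Real.cosh x
  - 504 * x * Real.sinh x - 84 * x ^ 2 * Real.cosh x - 4 * x ^ 3 * Real.sinh x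

lemma dsinh3 (x : ℝ) : HasDerivAt (fun x : ℝ => Real.sinh (3*x)) (3 * Real.cosh (3*x)) x := by
  have h := (Real.hasDerivAt_sinh (3*x)).comp x ((hasDerivAt_id x).const_mul 3)
  simp only [Function.comp_def, id_eq] at h
  convert h using 1
  · rfl
  · rfl
  ring

lemma dcosh3 (x : ℝ) : HasDerivAt (fun x : ℝ => Real.cosh (3*x)) (3 * Real.sinh (3*x)) x := by
  have h := (Real.hasDerivAt_cosh (3*x)).comp x ((hasDerivAt_id x).const_mul 3)
  simp only [Function.comp_def, id_eq] at h
  convert h using 1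
  · rfl
  · rfl
  ring

lemma dx1 (x : ℝ) : HasDerivAt (fun x : ℝ => x) 1 x := hasDerivAt_id x
lemma dx2 (x : ℝ) : HasDerivAt (fun x : ℝ => x ^ 2) (2 * x) x := by
  simpa using hasDerivAt_pow 2 x
lemma dx3 (x : ℝ) : HasDerivAt (fun x : ℝ => x ^ 3) (3 * x ^ 2) x := by
  simpa using hasDerivAt_pow 3 x

lemma dF0 (x : ℝ) : HasDerivAt F0 (F1 x) x := by
  have h := ((dsinh3 x).sub ((Real.hasDerivAt_sinh x).const_mul 3)).sub
    (((dx3 x).mul (Real.hasDerivAt_cosh x)).const_mul 4)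
  convert h using 1
  · rfl
  · rfl
  · funext t; simp only [F0, Pi.sub_apply, Pi.mul_apply]; ring
  · simp only [F1]; ring

lemma dF1 (x : ℝ) : HasDerivAt F1 (F2 x) x := by
  have h := ((((dcosh3 x).const_mul 3).sub ((Real.hasDerivAt_cosh x).const_mul 3)).sub
    (((dx2 x).mul (Real.hasDerivAt_cosh x)).const_mul 12)).sub
    (((dx3 x).mul (Real.hasDerivAt_sinh x)).const_mul 4)
  convert h using 1
  · rfl
  · rfl
  · funext t; simp only [F1, Pi.sub_apply, Pi.mul_apply]; ring
  · simp only [F2]; ring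

lemma dF2 (x : ℝ) : HasDerivAt F2 (F3 x) x := by
  have h := (((((dsinh3 x).const_mul 9).sub ((Real.hasDerivAt_sinh x).const_mul 3)).sub
    (((dx1 x).mul (Real.hasDerivAt_cosh x)).const_mul 24)).sub
    (((dx2 x).mul (Real.hasDerivAt_sinh x)).const_mul 24)).sub
    (((dx3 x).mul (Real.hasDerivAt_cosh x)).const_mul 4)
  convert h using 1
  · rfl
  · rfl
  · funext t; simp only [F2, Pi.sub_apply, Pi.mul_apply]; ring
  · simp only [F3]; ring

lemma dF3 (x : ℝ) : HasDerivAt F3 (F4 x) x := by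
  have h := (((((dcosh3 x).const_mul 27).sub ((Real.hasDerivAt_cosh x).const_mul 27)).sub
    (((dx1 x).mul (Real.hasDerivAt_sinh x)).const_mul 72)).sub
    (((dx2 x).mul (Real.hasDerivAt_cosh x)).const_mul 36)).sub
    (((dx3 x).mul (Real.hasDerivAt_sinh x)).const_mul 4)
  convert h using 1
  · rfl
  · rfl
  · funext t; simp only [F3, Pi.sub_apply, Pi.mul_apply]; ring
  · simp only [F4]; ring

lemma dF4 (x : ℝ) : HasDerivAt F4 (F5 x) x := by
  have h := (((((dsinh3 x).const_mul 81).sub ((Real.hasDerivAt_sinh x).const_mul 99)).sub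
    (((dx1 x).mul (Real.hasDerivAt_cosh x)).const_mul 144)).sub
    (((dx2 x).mul (Real.hasDerivAt_sinh x)).const_mul 48)).sub
    (((dx3 x).mul (Real.hasDerivAt_cosh x)).const_mul 4)
  convert h using 1
  · rfl
  · rfl
  · funext t; simp only [F4, Pi.sub_apply, Pi.mul_apply]; ring
  · simp only [F5]; ring

lemma dF5 (x : ℝ) : HasDerivAt F5 (F6 x) x := by
  have h := (((((dcosh3 x).const_mul 243).sub ((Real.hasDerivAt_cosh x).const_mul 243)).sub
    (((dx1 x).mul (Real.hasDerivAt_sinh x)).const_mul 240)).sub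
    (((dx2 x).mul (Real.hasDerivAt_cosh x)).const_mul 60)).sub
    (((dx3 x).mul (Real.hasDerivAt_sinh x)).const_mul 4)
  convert h using 1
  · rfl
  · rfl
  · funext t; simp only [F5, Pi.sub_apply, Pi.mul_apply]; ring
  · simp only [F6]; ring

lemma dF6 (x : ℝ) : HasDerivAt F6 (F7 x) x := by
  have h := (((((dsinh3 x).const_mul 729).sub ((Real.hasDerivAt_sinh x).const_mul 483)).sub
    (((dx1 x).mul (Real.hasDerivAt_cosh x)).const_mul 360)).sub
    (((dx2 x).mul (Real.hasDerivAt_sinh x)).const_mul 72)).sub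
    (((dx3 x).mul (Real.hasDerivAt_cosh x)).const_mul 4)
  convert h using 1
  · rfl
  · rfl
  · funext t; simp only [F6, Pi.sub_apply, Pi.mul_apply]; ring
  · simp only [F7]; ring

lemma sinh_cubed_bound (y : ℝ) (hy : 0 ≤ y) : y ^ 3 ≤ 6 * Real.sinh y := by
  have h2 : ∀ x : ℝ, 0 ≤ x → 0 ≤ Real.sinh x - x := by
    intro x hx
    have := Real.self_le_sinh_iff.mpr hx
    linarith
  have h1 : ∀ x : ℝ, 0 ≤ x → 0 ≤ Real.cosh x - 1 - x ^ 2 / 2 := by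
    apply aux_nonneg _ (fun x => Real.sinh x - x)
    · intro x
      have h := ((Real.hasDerivAt_cosh x).sub_const 1).sub ((dx2 x).div_const 2)
      convert h using 1
      · rfl
      · rfl
      · rfl
      ring
    · simp
    · exact h2
  have h0 : ∀ x : ℝ, 0 ≤ x → 0 ≤ Real.sinh x - x - x ^ 3 / 6 := by
    apply aux_nonneg _ (fun x => Real.cosh x - 1 - x ^ 2 / 2)
    · intro x
      have h := ((Real.hasDerivAt_sinh x).sub (dx1 x)).sub ((dx3 x).div_const 6)
      convert h using 1
      · rfl
      · rfl
      · rfl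
      ring
    · simp
    · exact h1
  have := h0 y hy
  nlinarith [h2 y hy]

lemma cosh_sq_bound (y : ℝ) (hy : 0 ≤ y) : y ^ 2 ≤ 2 * (Real.cosh y - 1) := by
  have h2 : ∀ x : ℝ, 0 ≤ x → 0 ≤ Real.sinh x - x := by
    intro x hx
    have := Real.self_le_sinh_iff.mpr hx
    linarith
  have h1 : ∀ x : ℝ, 0 ≤ x → 0 ≤ Real.cosh x - 1 - x ^ 2 / 2 := by
    apply aux_nonneg _ (fun x => Real.sinh x - x)
    · intro x
      have h := ((Real.hasDerivAt_cosh x).sub_const 1).sub ((dx2 x).div_const 2)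
      convert h using 1
      · rfl
      · rfl
      · rfl
      ring
    · simp
    · exact h2
  have := h1 y hy
  linarith

lemma F7_nonneg (x : ℝ) (hx : 0 ≤ x) : 0 ≤ F7 x := by
  have hc3 : Real.cosh (3*x) = 4 * Real.cosh x ^ 3 - 3 * Real.cosh x := Real.cosh_three_mul x
  have hc1 : 1 ≤ Real.cosh x := Real.one_le_cosh x
  have hs0 : x ≤ Real.sinh x := Real.self_le_sinh_iff.mpr hx
  have hsc : Real.cosh x ^ 2 - Real.sinh x ^ 2 = 1 := Real.cosh_sq_sub_sinh_sq x
  have hs : 0 ≤ Real.sinh x := le_trans hx hs0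
  have h3 : x ^ 3 ≤ 6 * Real.sinh x := sinh_cubed_bound x hx
  have h2 : x ^ 2 ≤ 2 * (Real.cosh x - 1) := cosh_sq_bound x hx
  have hc0 : (0:ℝ) ≤ Real.cosh x := le_trans zero_le_one hc1
  simp only [F7, hc3]
  -- bound each negative term
  have b1 : 504 * x * Real.sinh x ≤ 504 * (Real.cosh x ^ 2 - 1) := by
    nlinarith [mul_le_mul_of_nonneg_right hs0 hs]
  have b2 : 84 * x ^ 2 * Real.cosh x ≤ 168 * (Real.cosh x - 1) * Real.cosh x := by
    nlinarith [mul_le_mul_of_nonneg_right h2 hc0]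
  have b3 : 4 * x ^ 3 * Real.sinh x ≤ 24 * (Real.cosh x ^ 2 - 1) := by
    nlinarith [mul_le_mul_of_nonneg_right h3 hs]
  nlinarith [pow_le_pow_left₀ zero_le_one hc1 3, sq_nonneg (Real.cosh x - 1),
    mul_le_mul_of_nonneg_left hc1 hc0, sq_nonneg (Real.cosh x)]

/-- Lazarevic's inequality. -/
lemma lazarevic (y : ℝ) (hy : 0 ≤ y) : y ^ 3 * Real.cosh y ≤ (Real.sinh y) ^ 3 := by
  have h6 := aux_nonneg F6 F7 dF6 (by simp [F6]) F7_nonneg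
  have h5 := aux_nonneg F5 F6 dF5 (by simp [F5]) h6
  have h4 := aux_nonneg F4 F5 dF4 (by simp [F4]) h5
  have h3 := aux_nonneg F3 F4 dF3 (by simp [F3]) h4
  have h2 := aux_nonneg F2 F3 dF2 (by simp [F2]) h3
  have h1 := aux_nonneg F1 F2 dF1 (by simp [F1]) h2
  have h0 := aux_nonneg F0 F1 dF0 (by simp [F0]) h1
  have h := h0 y hy
  simp only [F0] at h
  have hid : Real.sinh (3 * y) = 4 * Real.sinh y ^ 3 + 3 * Real.sinh y := Real.sinh_three_mul y
  rw [hid] at h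
  linarith

theorem stmt_16 (y δ : ℝ) (hy : 0 < y) (hδ0 : 0 ≤ δ) (hδ1 : δ ≤ 1 / 3) :
    y / Real.sinh y ≤ 2 ^ δ * Real.exp (-δ * y) := by
  have hs : 0 < Real.sinh y := Real.sinh_pos_iff.mpr hy
  have hys : y / Real.sinh y ≤ 1 := by
    rw [div_le_one hs]
    exact Real.self_le_sinh_iff.mpr hy.le
  have hA : (0:ℝ) < 2 * Real.exp (-y) := by positivity
  have hrw : 2 ^ δ * Real.exp (-δ * y) = (2 * Real.exp (-y)) ^ δ := by
    rw [Real.mul_rpow (by norm_num) (Real.exp_pos _).le, ← Real.exp_mul]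
    ring_nf
  rw [hrw]
  rcases le_or_gt (2 * Real.exp (-y)) 1 with hA1 | hA1
  · -- hard case: use exponent 1/3
    have hmono : (2 * Real.exp (-y)) ^ ((1:ℝ)/3) ≤ (2 * Real.exp (-y)) ^ δ :=
      Real.rpow_le_rpow_of_exponent_ge hA hA1 hδ1
    refine le_trans ?_ hmono
    have hc : 1 ≤ Real.cosh y := Real.one_le_cosh y
    have hcpos : (0:ℝ) < Real.cosh y := lt_of_lt_of_le one_pos hc
    have hlaz : y ^ 3 * Real.cosh y ≤ Real.sinh y ^ 3 := lazarevic y hy.le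
    have hch : 1 / Real.cosh y ≤ 2 * Real.exp (-y) := by
      rw [div_le_iff₀ hcpos]
      have hce : Real.cosh y = (Real.exp y + Real.exp (-y)) / 2 := Real.cosh_eq y
      rw [hce]
      have h1 : Real.exp (-y) * Real.exp y = 1 := by
        rw [← Real.exp_add]; simp
      nlinarith [sq_nonneg (Real.exp (-y)), Real.exp_pos (-y)]
    have hcube : (y / Real.sinh y) ^ 3 ≤ 2 * Real.exp (-y) := by
      have : (y / Real.sinh y) ^ 3 ≤ 1 / Real.cosh y := by
        rw [div_pow, div_le_div_iff₀ (by positivity) hcpos]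
        nlinarith [hlaz]
      linarith
    have hyspos : 0 < y / Real.sinh y := by positivity
    have hr := Real.rpow_le_rpow (le_of_lt (pow_pos hyspos 3)) hcube
      (by norm_num : (0:ℝ) ≤ 1/3)
    calc y / Real.sinh y = ((y / Real.sinh y) ^ 3) ^ ((1:ℝ)/3) := by
          rw [← Real.rpow_natCast (y / Real.sinh y) 3, ← Real.rpow_mul hyspos.le]
          norm_num
      _ ≤ (2 * Real.exp (-y)) ^ ((1:ℝ)/3) := hr
  · have : (1:ℝ) ≤ (2 * Real.exp (-y)) ^ δ := Real.one_le_rpow hA1.le hδ0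
    linarith
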